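/- Let p be an offspring distribution supported on {1, a} with p_1 = q ∈ (0,1), p_a = 1 − q for a ≥ 2, mean μ = q + a(1−q), and size-biased distribution p̃_k = k p_k/μ. For the vertex-type densities f^χ = ∑_k p_k · P(sign[X̃ + S_k − k(k+1)] = χ) with S_k a sum of k i.i.d. p-variables and X̃ ∼ p̃ independent, one has f⁺ = q − q³/μ, f⁰ = (q³ + a(1−q)^{a+2})/μ, and f⁻ = (1−q) − a(1−q)^{a+2}/μ. -/
import Mathlib


open scoped ENNReal

/-- Law of `S_k = X_1 + ⋯ + X_k`, a sum of `k` i.i.d. random variables with law `p`. -/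
noncomputable def Spmf (p : PMF ℕ) : ℕ → PMF ℕ
  | 0 => PMF.pure 0
  | k + 1 => (Spmf p k).bind fun s => p.map fun x => s + x

/-- Probability that a random variable with law `q` lies in the set `A`. -/
noncomputable def prob (q : PMF ℕ) (A : Set ℕ) : ℝ≥0∞ := ∑' n, A.indicator q n

/-- Vertex-type density `f^χ = ∑_k p_k P(sign[X̃ + S_k - k(k+1)] = χ)`, where `X̃` has the
size-biased law `p̃` and is independent of `S_k`. -/
noncomputable def fchi (p ptilde : PMF ℕ) (χ : SignType) : ℝ≥0∞ :=
  ∑' k : ℕ, p k *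
    prob (ptilde.bind fun xt => (Spmf p k).map fun s => xt + s)
      {m : ℕ | SignType.sign ((m : ℤ) - k * (k + 1)) = χ}

/- ## Auxiliary lemmas -/

lemma prob_eq' (Q : PMF ℕ) (A : Set ℕ) : prob Q A = Q.toOuterMeasure A :=
  (PMF.toOuterMeasure_apply Q A).symm

lemma prob_bind' (P : PMF ℕ) (f : ℕ → PMF ℕ) (A : Set ℕ) :
    prob (P.bind f) A = ∑' x, P x * prob (f x) A := by
  simp [prob_eq', PMF.toOuterMeasure_bind_apply]

lemma prob_map' (P : PMF ℕ) (g : ℕ → ℕ) (A : Set ℕ) :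
    prob (P.map g) A = prob P (g ⁻¹' A) := by
  simp [prob_eq', PMF.toOuterMeasure_map_apply]

lemma prob_eq_zero' (Q : PMF ℕ) (A : Set ℕ) (h : ∀ n ∈ A, Q n = 0) : prob Q A = 0 := by
  unfold prob
  refine ENNReal.tsum_eq_zero.2 fun n => ?_
  by_cases hn : n ∈ A
  · simp [Set.indicator, hn, h n hn]
  · simp [Set.indicator, hn]

lemma prob_eq_one' (Q : PMF ℕ) (A : Set ℕ) (h : ∀ n, Q n ≠ 0 → n ∈ A) : prob Q A = 1 := by
  unfold prob
  rw [show ∑' n, A.indicator Q n = ∑' n, Q n from tsum_congr fun n => ?_, PMF.tsum_coe]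
  by_cases hn : n ∈ A
  · simp [Set.indicator, hn]
  · simp [Set.indicator, hn, not_not.1 fun h' => hn (h n h')]

lemma prob_eq_of' (Q : PMF ℕ) (A : Set ℕ) (c : ℕ) (hc : c ∈ A)
    (h : ∀ n ∈ A, n ≠ c → Q n = 0) : prob Q A = Q c := by
  unfold prob
  rw [tsum_eq_single c]
  · simp [Set.indicator, hc]
  · intro n hn
    by_cases hmem : n ∈ A
    · simp [Set.indicator, hmem, h n hmem hn]
    · simp [Set.indicator, hmem]

lemma prob_compl' (Q : PMF ℕ) (A : Set ℕ) : prob Q A = 1 - prob Q Aᶜ := by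
  have hadd : prob Q A + prob Q Aᶜ = 1 := by
    unfold prob
    rw [← ENNReal.tsum_add, ← PMF.tsum_coe Q]
    exact tsum_congr fun n => by
      by_cases hn : n ∈ A <;> simp [Set.indicator, hn]
  have hne : prob Q Aᶜ ≠ ∞ := by
    intro h; rw [h, add_top] at hadd; exact (by simp : (⊤:ℝ≥0∞) ≠ 1) hadd
  exact ENNReal.eq_sub_of_add_eq hne hadd

lemma Spmf_one' (p : PMF ℕ) : Spmf p 1 = p := by
  show (PMF.pure 0).bind _ = p
  rw [PMF.pure_bind]
  simp only [zero_add]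
  exact PMF.map_id p

lemma Spmf_bound' (p : PMF ℕ) (a : ℕ) (hp : ∀ x, p x ≠ 0 → x ≤ a) :
    ∀ k s, k * a < s → Spmf p k s = 0 := by
  intro k
  induction k with
  | zero =>
    intro s hs
    show PMF.pure 0 s = 0
    rw [PMF.pure_apply, if_neg (by omega)]
  | succ k ih =>
    intro s hs
    show ((Spmf p k).bind fun t => p.map fun x => t + x) s = 0
    rw [PMF.bind_apply]
    refine ENNReal.tsum_eq_zero.2 fun t => ?_
    rcases Nat.lt_or_ge (k * a) t with ht | ht
    · rw [ih t ht, zero_mul]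
    · refine mul_eq_zero.2 (Or.inr ?_)
      rw [PMF.map_apply]
      refine ENNReal.tsum_eq_zero.2 fun x => ?_
      split_ifs with hcase
      · by_contra hx
        have hxa := hp x hx
        have he : (k+1) * a = k * a + a := by ring
        omega
      · rfl

lemma Spmf_top' (p : PMF ℕ) (a : ℕ) (hp : ∀ x, p x ≠ 0 → x ≤ a) :
    ∀ k, Spmf p k (k * a) = (p a) ^ k := by
  intro k
  induction k with
  | zero =>
    show PMF.pure 0 (0 * a) = _
    rw [PMF.pure_apply, if_pos (by omega), pow_zero]
  | succ k ih =>
    show ((Spmf p k).bind fun t => p.map fun x => t + x) ((k+1) * a) = _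
    rw [PMF.bind_apply, tsum_eq_single (k * a)]
    · rw [ih, PMF.map_apply, tsum_eq_single a]
      · rw [if_pos (by ring), pow_succ]
      · intro x hx
        rw [if_neg]
        intro hcase
        have he : (k+1) * a = k * a + a := by ring
        omega
    · intro t ht
      rcases Nat.lt_or_ge (k * a) t with h | h
      · rw [Spmf_bound' p a hp k t h, zero_mul]
      · have h' : t < k * a := lt_of_le_of_ne h ht
        refine mul_eq_zero.2 (Or.inr ?_)
        rw [PMF.map_apply]
        refine ENNReal.tsum_eq_zero.2 fun x => ?_
        split_ifs with hcase
        · by_contra hx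
          have hxa := hp x hx
          have he : (k+1) * a = k * a + a := by ring
          omega
        · rfl

/-- For the offspring distribution supported on `{1, a}` with `p 1 = q`, `p a = 1 - q`,
the vertex-type densities are `f⁺ = q - q³/μ`, `f⁰ = (q³ + a(1-q)^{a+2})/μ`, and
`f⁻ = (1-q) - a(1-q)^{a+2}/μ`, where `μ = q + a(1-q)`. -/
theorem two_point_densities (p ptilde : PMF ℕ) (q : ℝ≥0∞) (a : ℕ)
    (hq0 : 0 < q) (hq1 : q < 1) (ha : 2 ≤ a)
    (hp1 : p 1 = q) (hpa : p a = 1 - q) (hp : ∀ k : ℕ, k ≠ 1 → k ≠ a → p k = 0)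
    (μ : ℝ≥0∞) (hμ : μ = q + a * (1 - q))
    (htilde : ∀ k : ℕ, ptilde k = k * p k / μ) :
    fchi p ptilde SignType.pos = q - q ^ 3 / μ ∧
    fchi p ptilde SignType.zero = (q ^ 3 + a * (1 - q) ^ (a + 2)) / μ ∧
    fchi p ptilde SignType.neg = (1 - q) - a * (1 - q) ^ (a + 2) / μ := by
  classical
  have h1a : (1 : ℕ) ≠ a := by omega
  -- basic finiteness / positivity facts
  have hqle : q ≤ 1 := hq1.le
  have hrle : (1 - q : ℝ≥0∞) ≤ 1 := tsub_le_self
  have hrtop : (1 - q : ℝ≥0∞) ≠ ∞ := (hrle.trans_lt ENNReal.one_lt_top).ne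
  have hμpos : 0 < μ := hμ ▸ lt_of_lt_of_le hq0 le_self_add
  have hμ0 : μ ≠ 0 := hμpos.ne'
  have hμtop : μ ≠ ∞ := by
    rw [hμ]
    exact ENNReal.add_ne_top.2 ⟨hq1.ne_top, ENNReal.mul_ne_top (ENNReal.natCast_ne_top a) hrtop⟩
  have hsum : q + (1 - q) = 1 := by rw [add_comm]; exact tsub_add_cancel_of_le hqle
  have hsum' : (1 - q) + q = 1 := tsub_add_cancel_of_le hqle
  -- support of p
  have hpsupp : ∀ x, p x ≠ 0 → x ≤ a := by
    intro x hx
    rcases eq_or_ne x 1 with h1 | h1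
    · omega
    rcases eq_or_ne x a with h2 | h2
    · omega
    · exact absurd (hp x h1 h2) hx
  -- values of ptilde
  have hpt1 : ptilde 1 = q / μ := by rw [htilde 1, hp1, Nat.cast_one, one_mul]
  have hpta : ptilde a = a * (1 - q) / μ := by rw [htilde a, hpa]
  have hpt0 : ∀ x, x ≠ 1 → x ≠ a → ptilde x = 0 := by
    intro x hx1 hxa
    rw [htilde x, hp x hx1 hxa, mul_zero, ENNReal.zero_div]
  -- two-point probability formula for p
  have hprob_p : ∀ B : Set ℕ,
      prob p B = (if 1 ∈ B then q else 0) + (if a ∈ B then 1 - q else 0) := by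
    intro B
    unfold prob
    rw [tsum_eq_sum (s := {1, a}) (fun n hn => ?_), Finset.sum_pair h1a]
    · by_cases h1 : 1 ∈ B <;> by_cases h2 : a ∈ B <;>
        simp [Set.indicator, h1, h2, hp1, hpa]
    · simp only [Finset.mem_insert, Finset.mem_singleton, not_or] at hn
      by_cases hmem : n ∈ B
      · simp [Set.indicator, hmem, hp n hn.1 hn.2]
      · simp [Set.indicator, hmem]
  -- reduction of fchi to the two contributing terms
  have hfchi : ∀ χ : SignType, fchi p ptilde χ =
      q * prob (ptilde.bind fun xt => (Spmf p 1).map fun s => xt + s)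
        {m : ℕ | SignType.sign ((m : ℤ) - (1:ℕ) * ((1:ℕ) + 1)) = χ} +
      (1 - q) * prob (ptilde.bind fun xt => (Spmf p a).map fun s => xt + s)
        {m : ℕ | SignType.sign ((m : ℤ) - (a:ℕ) * ((a:ℕ) + 1)) = χ} := by
    intro χ
    unfold fchi
    rw [tsum_eq_sum (s := {1, a}) (fun k hk => ?_), Finset.sum_pair h1a, hp1, hpa]
    · simp only [Finset.mem_insert, Finset.mem_singleton, not_or] at hk
      rw [hp k hk.1 hk.2, zero_mul]
  -- reduction of the inner bind to the two contributing terms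
  have hbind : ∀ (k : ℕ) (A : Set ℕ),
      prob (ptilde.bind fun xt => (Spmf p k).map fun s => xt + s) A =
      q / μ * prob (Spmf p k) ((fun s => 1 + s) ⁻¹' A) +
      a * (1 - q) / μ * prob (Spmf p k) ((fun s => a + s) ⁻¹' A) := by
    intro k A
    rw [prob_bind', tsum_eq_sum (s := {1, a}) (fun x hx => ?_), Finset.sum_pair h1a,
      hpt1, hpta, prob_map', prob_map']
    · simp only [Finset.mem_insert, Finset.mem_singleton, not_or] at hx
      rw [hpt0 x hx.1 hx.2, zero_mul]
  -- sign conditions as natural-number conditions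
  have hmem_pos : ∀ (xt n k : ℕ),
      (n ∈ (fun s => xt + s) ⁻¹' {m : ℕ | SignType.sign ((m : ℤ) - (k:ℕ) * ((k:ℕ) + 1)) = SignType.pos})
        ↔ k * (k + 1) < xt + n := by
    intro xt n k
    simp only [Set.mem_preimage, Set.mem_setOf_eq, SignType.pos_eq_one, sign_eq_one_iff, sub_pos]
    push_cast
    constructor <;> intro h <;> exact_mod_cast h
  have hmem_zero : ∀ (xt n k : ℕ),
      (n ∈ (fun s => xt + s) ⁻¹' {m : ℕ | SignType.sign ((m : ℤ) - (k:ℕ) * ((k:ℕ) + 1)) = SignType.zero})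
        ↔ xt + n = k * (k + 1) := by
    intro xt n k
    simp only [Set.mem_preimage, Set.mem_setOf_eq, SignType.zero_eq_zero, sign_eq_zero_iff,
      sub_eq_zero]
    push_cast
    constructor <;> intro h <;> exact_mod_cast h
  have hmem_neg : ∀ (xt n k : ℕ),
      (n ∈ (fun s => xt + s) ⁻¹' {m : ℕ | SignType.sign ((m : ℤ) - (k:ℕ) * ((k:ℕ) + 1)) = SignType.neg})
        ↔ xt + n < k * (k + 1) := by
    intro xt n k
    simp only [Set.mem_preimage, Set.mem_setOf_eq, SignType.neg_eq_neg_one, sign_eq_neg_one_iff,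
      sub_neg]
    push_cast
    constructor <;> intro h <;> exact_mod_cast h
  have he : a * (a + 1) = a * a + a := by ring
  -- facts about Spmf p a
  have hQb : ∀ s, a * a < s → Spmf p a s = 0 := Spmf_bound' p a hpsupp a
  have hQt : Spmf p a (a * a) = (1 - q) ^ a := by rw [Spmf_top' p a hpsupp a, hpa]
  -- the six probabilities for k = 1
  have h11pos : prob (Spmf p 1) ((fun s => 1 + s) ⁻¹'
      {m : ℕ | SignType.sign ((m : ℤ) - (1:ℕ) * ((1:ℕ) + 1)) = SignType.pos}) = 1 - q := by
    rw [Spmf_one', hprob_p, if_neg (by rw [hmem_pos] <;> omega), if_pos (by rw [hmem_pos] <;> omega),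
      zero_add]
  have h1apos : prob (Spmf p 1) ((fun s => a + s) ⁻¹'
      {m : ℕ | SignType.sign ((m : ℤ) - (1:ℕ) * ((1:ℕ) + 1)) = SignType.pos}) = q + (1 - q) := by
    rw [Spmf_one', hprob_p, if_pos (by rw [hmem_pos] <;> omega), if_pos (by rw [hmem_pos] <;> omega)]
  have h11zero : prob (Spmf p 1) ((fun s => 1 + s) ⁻¹'
      {m : ℕ | SignType.sign ((m : ℤ) - (1:ℕ) * ((1:ℕ) + 1)) = SignType.zero}) = q := by
    rw [Spmf_one', hprob_p, if_pos (by rw [hmem_zero] <;> omega), if_neg (by rw [hmem_zero] <;> omega),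
      add_zero]
  have h1azero : prob (Spmf p 1) ((fun s => a + s) ⁻¹'
      {m : ℕ | SignType.sign ((m : ℤ) - (1:ℕ) * ((1:ℕ) + 1)) = SignType.zero}) = 0 := by
    rw [Spmf_one', hprob_p, if_neg (by rw [hmem_zero] <;> omega), if_neg (by rw [hmem_zero] <;> omega)]
    simp
  have h11neg : prob (Spmf p 1) ((fun s => 1 + s) ⁻¹'
      {m : ℕ | SignType.sign ((m : ℤ) - (1:ℕ) * ((1:ℕ) + 1)) = SignType.neg}) = 0 := by
    rw [Spmf_one', hprob_p, if_neg (by rw [hmem_neg] <;> omega), if_neg (by rw [hmem_neg] <;> omega)]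
    simp
  have h1aneg : prob (Spmf p 1) ((fun s => a + s) ⁻¹'
      {m : ℕ | SignType.sign ((m : ℤ) - (1:ℕ) * ((1:ℕ) + 1)) = SignType.neg}) = 0 := by
    rw [Spmf_one', hprob_p, if_neg (by rw [hmem_neg] <;> omega), if_neg (by rw [hmem_neg] <;> omega)]
    simp
  -- the six probabilities for k = a
  have ha1pos : prob (Spmf p a) ((fun s => 1 + s) ⁻¹'
      {m : ℕ | SignType.sign ((m : ℤ) - (a:ℕ) * ((a:ℕ) + 1)) = SignType.pos}) = 0 := by
    refine prob_eq_zero' _ _ fun n hn => ?_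
    rw [hmem_pos] at hn
    exact hQb n (by omega)
  have haapos : prob (Spmf p a) ((fun s => a + s) ⁻¹'
      {m : ℕ | SignType.sign ((m : ℤ) - (a:ℕ) * ((a:ℕ) + 1)) = SignType.pos}) = 0 := by
    refine prob_eq_zero' _ _ fun n hn => ?_
    rw [hmem_pos] at hn
    exact hQb n (by omega)
  have ha1zero : prob (Spmf p a) ((fun s => 1 + s) ⁻¹'
      {m : ℕ | SignType.sign ((m : ℤ) - (a:ℕ) * ((a:ℕ) + 1)) = SignType.zero}) = 0 := by
    refine prob_eq_zero' _ _ fun n hn => ?_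
    rw [hmem_zero] at hn
    exact hQb n (by omega)
  have haazero : prob (Spmf p a) ((fun s => a + s) ⁻¹'
      {m : ℕ | SignType.sign ((m : ℤ) - (a:ℕ) * ((a:ℕ) + 1)) = SignType.zero}) = (1 - q) ^ a := by
    rw [prob_eq_of' _ _ (a * a) (by rw [hmem_zero] <;> omega) fun n hn hne => ?_, hQt]
    rw [hmem_zero] at hn
    exact absurd (by omega : n = a * a) hne
  have ha1neg : prob (Spmf p a) ((fun s => 1 + s) ⁻¹'
      {m : ℕ | SignType.sign ((m : ℤ) - (a:ℕ) * ((a:ℕ) + 1)) = SignType.neg}) = 1 := by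
    refine prob_eq_one' _ _ fun n hn => ?_
    rw [hmem_neg]
    have hle : n ≤ a * a := by
      by_contra hgt
      exact hn (hQb n (by omega))
    omega
  have haaneg : prob (Spmf p a) ((fun s => a + s) ⁻¹'
      {m : ℕ | SignType.sign ((m : ℤ) - (a:ℕ) * ((a:ℕ) + 1)) = SignType.neg})
      = 1 - (1 - q) ^ a := by
    rw [prob_compl']
    congr 1
    rw [prob_eq_of' _ _ (a * a) ?_ fun n hn hne => ?_, hQt]
    · simp only [Set.mem_compl_iff]
      rw [hmem_neg]
      omega
    · simp only [Set.mem_compl_iff] at hn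
      rw [hmem_neg] at hn
      exact hQb n (by omega)
  -- finiteness of the subtracted terms
  have hfin1 : q ^ 3 / μ ≠ ∞ := (ENNReal.div_lt_top (ENNReal.pow_ne_top hq1.ne_top) hμ0).ne
  have hfin2 : (a : ℝ≥0∞) * (1 - q) ^ (a + 2) / μ ≠ ∞ :=
    (ENNReal.div_lt_top (ENNReal.mul_ne_top (ENNReal.natCast_ne_top a)
      (ENNReal.pow_ne_top hrtop)) hμ0).ne
  have hwle : (1 - q) ^ a ≤ 1 := pow_le_one' hrle a
  refine ⟨?_, ?_, ?_⟩
  · -- positive part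
    rw [hfchi SignType.pos, hbind 1 _, hbind a _, h11pos, h1apos, ha1pos, haapos, hsum,
      mul_zero, mul_zero, add_zero, mul_zero, add_zero, mul_one]
    refine ENNReal.eq_sub_of_add_eq hfin1 ?_
    have e1 : q * (q / μ * (1 - q) + (a : ℝ≥0∞) * (1 - q) / μ)
        = (q * q * (1 - q) + q * ((a : ℝ≥0∞) * (1 - q))) / μ := by
      simp only [div_eq_mul_inv]; ring
    rw [e1, ENNReal.div_add_div_same]
    have e2 : q * q * (1 - q) + q * ((a : ℝ≥0∞) * (1 - q)) + q ^ 3 = q * μ := by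
      rw [hμ]
      calc q * q * (1 - q) + q * ((a : ℝ≥0∞) * (1 - q)) + q ^ 3
          = q * q * ((1 - q) + q) + q * ((a : ℝ≥0∞) * (1 - q)) := by ring
        _ = q * (q + (a : ℝ≥0∞) * (1 - q)) := by rw [hsum']; ring
    rw [e2, mul_div_assoc, ENNReal.div_self hμ0 hμtop, mul_one]
  · -- zero part
    rw [hfchi SignType.zero, hbind 1 _, hbind a _, h11zero, h1azero, ha1zero, haazero,
      mul_zero, add_zero, mul_zero, zero_add]
    simp only [div_eq_mul_inv]
    ring
  · -- negative part
    rw [hfchi SignType.neg, hbind 1 _, hbind a _, h11neg, h1aneg, ha1neg, haaneg,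
      mul_zero, mul_zero, add_zero, mul_zero, zero_add, mul_one]
    refine ENNReal.eq_sub_of_add_eq hfin2 ?_
    have e1 : (1 - q) * (q / μ + (a : ℝ≥0∞) * (1 - q) / μ * (1 - (1 - q) ^ a))
        = (1 - q) * q / μ
          + (1 - q) * ((a : ℝ≥0∞) * (1 - q)) / μ * (1 - (1 - q) ^ a) := by
      simp only [div_eq_mul_inv]; ring
    have e2 : (a : ℝ≥0∞) * (1 - q) ^ (a + 2) / μ
        = (1 - q) * ((a : ℝ≥0∞) * (1 - q)) / μ * (1 - q) ^ a := by
      simp only [div_eq_mul_inv]; ring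
    rw [e1, e2, add_assoc, ← mul_add, tsub_add_cancel_of_le hwle, mul_one,
      ENNReal.div_add_div_same]
    have e3 : (1 - q) * q + (1 - q) * ((a : ℝ≥0∞) * (1 - q)) = (1 - q) * μ := by
      rw [hμ]; ring
    rw [e3, mul_div_assoc, ENNReal.div_self hμ0 hμtop, mul_one]
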